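/- The graph K_1 ⊔ K_7 (the disjoint union of an isolated vertex and a complete graph on 7 vertices) contains no two vertex-disjoint copies of the path P_4, and its complement contains no Jahangir graph J_4 as a subgraph. -/

import Mathlib

open SimpleGraph

/-- `G` is contained in `F` as a (not necessarily induced) subgraph, i.e. there is an
injective graph homomorphism from `G` into `F`. -/
def Contains {α : Type*} {β : Type*} (G : SimpleGraph α) (F : SimpleGraph β) : Prop :=
  ∃ f : α → β, Function.Injective f ∧ ∀ ⦃a b : α⦄, G.Adj a b → F.Adj (f a) (f b)

/-- The Jahangir graph `J_{2m}` on `2m+1` vertices: a cycle on the vertices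
`0, 1, …, 2m-1` together with one additional hub vertex (index `2m`) adjacent to the
alternate cycle vertices `0, 2, …, 2m-2`. -/
def jahangir (m : ℕ) : SimpleGraph (Fin (2 * m + 1)) :=
  SimpleGraph.fromRel (fun a b =>
    (a.val < 2 * m ∧ b.val < 2 * m ∧ b.val = (a.val + 1) % (2 * m)) ∨
    (a.val = 2 * m ∧ b.val < 2 * m ∧ b.val % 2 = 0))

/-- The disjoint union of `k` copies of the graph `G`. -/
def kCopies {α : Type*} (k : ℕ) (G : SimpleGraph α) : SimpleGraph (Fin k × α) where
  Adj a b := a.1 = b.1 ∧ G.Adj a.2 b.2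
  symm := ⟨fun _ _ h => ⟨h.1.symm, h.2.symm⟩⟩
  loopless := ⟨fun a h => G.irrefl h.2⟩

/-- The disjoint union `K_a ⊔ K_b` of two complete graphs. -/
def twoCliques (a b : ℕ) : SimpleGraph (Fin a ⊕ Fin b) :=
  SimpleGraph.fromRel (fun x y => x.isLeft = y.isLeft)

/-- `ramseyProp G H N` says that every simple graph `F` on `N` vertices contains `G`
as a subgraph, or its complement contains `H` as a subgraph.  The Ramsey number
`R(G, H)` is the least `N` with this property. -/
def ramseyProp {α : Type*} {β : Type*} (G : SimpleGraph α) (H : SimpleGraph β) (N : ℕ) : Prop :=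
  ∀ F : SimpleGraph (Fin N), Contains G F ∨ Contains H Fᶜ

instance : DecidableRel (jahangir 2).Adj :=
  fun a b => decidable_of_iff' _ (SimpleGraph.fromRel_adj _ a b)

instance : DecidableRel (twoCliques 1 7).Adj :=
  fun a b => decidable_of_iff' _ (SimpleGraph.fromRel_adj _ a b)

/-- `K_1 ⊔ K_7` contains no two vertex-disjoint copies of `P_4`, and its complement
contains no `J_4`. -/
theorem twoP4_J4_lower :
    ¬ Contains (kCopies 2 (pathGraph 4)) (twoCliques 1 7) ∧
    ¬ Contains (jahangir 2) (twoCliques 1 7)ᶜ := by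
  constructor
  · rintro ⟨f, hinj, hadj⟩
    have hbij : Function.Bijective f :=
      (Fintype.bijective_iff_injective_and_card f).2 ⟨hinj, by decide⟩
    obtain ⟨x, hx⟩ := hbij.2 (Sum.inl 0)
    have hnb : ∀ j : Fin 4, (pathGraph 4).Adj j (![1, 0, 1, 2] j) := by
      intro j
      fin_cases j <;> rw [pathGraph_adj] <;> simp
    have hk : (kCopies 2 (pathGraph 4)).Adj x (x.1, ![1, 0, 1, 2] x.2) := ⟨rfl, hnb x.2⟩
    have h := hadj hk
    rw [hx] at h
    have hiso : ∀ y : Fin 1 ⊕ Fin 7, ¬ (twoCliques 1 7).Adj (Sum.inl 0) y := by decide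
    exact hiso _ h
  · rintro ⟨f, hinj, hadj⟩
    have h01 : (jahangir 2).Adj 0 1 := by decide
    have h23 : (jahangir 2).Adj 2 3 := by decide
    have key : ∀ a b : Fin 1 ⊕ Fin 7, (twoCliques 1 7)ᶜ.Adj a b →
        a = Sum.inl 0 ∨ b = Sum.inl 0 := by decide
    rcases key _ _ (hadj h01) with h | h <;> rcases key _ _ (hadj h23) with h' | h'
    · exact absurd (hinj (h.trans h'.symm)) (by decide)
    · exact absurd (hinj (h.trans h'.symm)) (by decide)
    · exact absurd (hinj (h.trans h'.symm)) (by decide)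
    · exact absurd (hinj (h.trans h'.symm)) (by decide)
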